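/- Let (C, d) be a cochain complex of vector spaces graded by 0 ≤ r ≤ 2n, equipped with degree-preserving sl(2)-operators L (degree +2), Λ (degree −2), A = Σ(n−r)π_r, satisfying [Λ,L]=A, [A,L]=−2L, [A,Λ]=2Λ, [L,d]=0, and define δ := [d,Λ]. Then δ² = 0 and dδ + δd = 0. -/

import Mathlib

section Aux

variable {M : Type*} [AddCommGroup M] [Module ℝ M]

/-- extension of the grading projections to integer indices -/
private def piZ (π : ℕ → Module.End ℝ M) : ℤ → Module.End ℝ M :=
  fun k => if 0 ≤ k then π k.toNat else 0

private lemma piZ_neg (π : ℕ → Module.End ℝ M) {k : ℤ} (hk : k < 0) : piZ π k = 0 :=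
  if_neg (by omega)

private lemma piZ_natCast (π : ℕ → Module.End ℝ M) (r : ℕ) : piZ π (r : ℤ) = π r := by
  simp [piZ]

private lemma deg_mul (π : ℕ → Module.End ℝ M) {a b : ℤ} {S T : Module.End ℝ M}
    (hS : ∀ k, S * piZ π k = piZ π (k + a) * (S * piZ π k))
    (hT : ∀ k, T * piZ π k = piZ π (k + b) * (T * piZ π k)) :
    ∀ k, (S * T) * piZ π k = piZ π (k + (a + b)) * ((S * T) * piZ π k) := by
  intro k
  have h1 : (S * T) * piZ π k = S * (T * piZ π k) := by rw [mul_assoc]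
  calc (S * T) * piZ π k = S * (piZ π (k + b) * (T * piZ π k)) := by rw [h1, ← hT k]
    _ = (S * piZ π (k + b)) * (T * piZ π k) := by rw [mul_assoc]
    _ = (piZ π (k + b + a) * (S * piZ π (k + b))) * (T * piZ π k) := by rw [← hS (k + b)]
    _ = piZ π (k + b + a) * (S * (piZ π (k + b) * (T * piZ π k))) := by
          rw [mul_assoc, mul_assoc]
    _ = piZ π (k + (a + b)) * ((S * T) * piZ π k) := by
          rw [← hT k, show k + b + a = k + (a + b) by ring]
          noncomm_ring

private lemma deg_sub (π : ℕ → Module.End ℝ M) {a : ℤ} {S T : Module.End ℝ M}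
    (hS : ∀ k, S * piZ π k = piZ π (k + a) * (S * piZ π k))
    (hT : ∀ k, T * piZ π k = piZ π (k + a) * (T * piZ π k)) :
    ∀ k, (S - T) * piZ π k = piZ π (k + a) * ((S - T) * piZ π k) := by
  intro k
  rw [sub_mul, mul_sub, ← hS k, ← hT k]

private lemma deg_congr (π : ℕ → Module.End ℝ M) {a b : ℤ} {S : Module.End ℝ M}
    (hab : a = b)
    (hS : ∀ k, S * piZ π k = piZ π (k + a) * (S * piZ π k)) :
    ∀ k, S * piZ π k = piZ π (k + b) * (S * piZ π k) := by subst hab; exact hS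

/-- the sequence of iterated commutators of Λ with x = [Λ, δ] -/
private def Xseq (Λ δ : Module.End ℝ M) : ℕ → Module.End ℝ M :=
  fun k => Nat.rec (Λ * δ - δ * Λ) (fun _ T => Λ * T - T * Λ) k

private lemma Xseq_zero (Λ δ : Module.End ℝ M) : Xseq Λ δ 0 = Λ * δ - δ * Λ := rfl

private lemma Xseq_succ (Λ δ : Module.End ℝ M) (k : ℕ) :
    Xseq Λ δ (k + 1) = Λ * Xseq Λ δ k - Xseq Λ δ k * Λ := rfl

end Aux

theorem delta_squared_zero
    {M : Type*} [AddCommGroup M] [Module ℝ M] (n : ℕ)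
    -- grading of C = ⊕_{r=0}^{2n} C^r by projections π r onto degree r
    (π : ℕ → Module.End ℝ M)
    (hortho : ∀ r s, r ≠ s → π r * π s = 0)
    (hidem : ∀ r, π r * π r = π r)
    (hsupp : ∀ r, 2 * n < r → π r = 0)
    (hsum : (∑ r ∈ Finset.range (2 * n + 1), π r) = 1)
    -- d, L, Λ of degrees +1, +2, −2 respectively
    (d L Λ : Module.End ℝ M)
    (hd2 : d * d = 0)
    (hddeg : ∀ r, d * π r = π (r + 1) * d * π r)
    (hLdeg : ∀ r, L * π r = π (r + 2) * L * π r)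
    (hΛdeg : ∀ r, Λ * π (r + 2) = π r * Λ * π (r + 2))
    (hΛ0 : Λ * π 0 = 0) (hΛ1 : Λ * π 1 = 0)
    -- the counting operator A = Σ (n − r) π_r
    (A : Module.End ℝ M)
    (hA : A = ∑ r ∈ Finset.range (2 * n + 1), ((n : ℝ) - r) • π r)
    -- sl(2) relations and [L, d] = 0
    (hΛL : Λ * L - L * Λ = A)
    (hAL : A * L - L * A = (-2 : ℝ) • L)
    (hAΛ : A * Λ - Λ * A = (2 : ℝ) • Λ)
    (hLd : L * d - d * L = 0)
    -- δ := [d, Λ]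
    (δ : Module.End ℝ M)
    (hδ : δ = d * Λ - Λ * d) :
    δ * δ = 0 ∧ d * δ + δ * d = 0 := by
  -- ## Step 0: projection bookkeeping
  have hd1 : d = ∑ s ∈ Finset.range (2 * n + 1), π (s + 1) * d * π s := by
    conv_lhs => rw [← mul_one d, ← hsum]
    rw [Finset.mul_sum]
    exact Finset.sum_congr rfl fun s _ => hddeg s
  have hπ0d : π 0 * d = 0 := by
    conv_lhs => rw [hd1]
    rw [Finset.mul_sum]
    refine Finset.sum_eq_zero fun s _ => ?_
    simp only [← mul_assoc]
    rw [hortho 0 (s + 1) (by omega)]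
    simp
  have hπd : ∀ r : ℕ, π (r + 1) * d = d * π r := by
    intro r
    conv_lhs => rw [hd1]
    rw [Finset.mul_sum]
    by_cases hr : r < 2 * n + 1
    · rw [Finset.sum_eq_single r]
      · simp only [← mul_assoc]
        rw [hidem, ← hddeg]
      · intro b _ hb
        simp only [← mul_assoc]
        rw [hortho (r + 1) (b + 1) (by omega)]
        simp
      · intro h; exact absurd (Finset.mem_range.mpr hr) h
    · rw [hsupp r (by omega), mul_zero]
      refine Finset.sum_eq_zero fun s hs => ?_
      have : s ≠ r := by
        have := Finset.mem_range.mp hs; omega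
      simp only [← mul_assoc]
      rw [hortho (r + 1) (s + 1) (by omega)]
      simp
  have hdπtop : d * π (2 * n) = 0 := by
    rw [hddeg, hsupp (2 * n + 1) (by omega)]
    simp
  -- [A, d] = -d
  have hAd : A * d - d * A = -d := by
    have e1 : A * d = ∑ r ∈ Finset.range (2 * n + 1), ((n : ℝ) - r) • (π r * d) := by
      rw [hA, Finset.sum_mul]
      exact Finset.sum_congr rfl fun r _ => smul_mul_assoc _ _ _
    have e2 : d * A = ∑ r ∈ Finset.range (2 * n + 1), ((n : ℝ) - r) • (d * π r) := by
      rw [hA, Finset.mul_sum]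
      exact Finset.sum_congr rfl fun r _ => mul_smul_comm _ _ _
    have e3 : (d : Module.End ℝ M) = ∑ r ∈ Finset.range (2 * n + 1), d * π r := by
      conv_lhs => rw [← mul_one d, ← hsum]
      rw [Finset.mul_sum]
    rw [e1, e2]
    rw [Finset.sum_range_succ' (fun r => ((n : ℝ) - r) • (π r * d)) (2 * n)]
    simp only [hπd, hπ0d, smul_zero, add_zero, Nat.cast_zero]
    have e4 : ∑ i ∈ Finset.range (2 * n), ((n : ℝ) - ↑(i + 1)) • (d * π i)
        = ∑ i ∈ Finset.range (2 * n + 1), ((n : ℝ) - ↑(i + 1)) • (d * π i) := by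
      rw [Finset.sum_range_succ, hdπtop, smul_zero, add_zero]
    rw [e4, ← Finset.sum_sub_distrib]
    have e5 : ∀ i : ℕ, ((n : ℝ) - ↑(i + 1)) • (d * π i) - ((n : ℝ) - ↑i) • (d * π i)
        = -(d * π i) := by
      intro i
      rw [← sub_smul, show ((n : ℝ) - ↑(i + 1)) - ((n : ℝ) - ↑i) = -1 by push_cast; ring,
        neg_one_smul]
    rw [Finset.sum_congr rfl fun i _ => e5 i, Finset.sum_neg_distrib, ← e3]
  -- ## Step 1: basic commutators
  have hAΛ2 : A * Λ - Λ * A = Λ + Λ := by rw [hAΛ]; exact two_smul ℝ Λ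
  have hδL : δ * L - L * δ = d := by
    rw [hδ]
    linear_combination (norm := noncomm_ring) d * hΛL - hΛL * d + Λ * hLd - hLd * Λ - hAd
  have hLδ : L * δ - δ * L = -d := by
    linear_combination (norm := noncomm_ring) -hδL
  have hdδ : d * δ + δ * d = 0 := by
    rw [hδ]
    linear_combination (norm := noncomm_ring) hd2 * Λ - Λ * hd2
  have hAδ : A * δ - δ * A = δ := by
    rw [hδ]
    linear_combination (norm := noncomm_ring) hAd * Λ - Λ * hAd + d * hAΛ2 - hAΛ2 * d
  -- ## Step 2: the sequence X k = ad_Λ^k [Λ, δ]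
  set X : ℕ → Module.End ℝ M := Xseq Λ δ with hX
  have hX0 : X 0 = Λ * δ - δ * Λ := rfl
  have hXs : ∀ k, X (k + 1) = Λ * X k - X k * Λ := fun k => rfl
  -- commutator helpers
  have hcommA : ∀ T : Module.End ℝ M,
      A * (Λ * T - T * Λ) - (Λ * T - T * Λ) * A
        = (Λ * (A * T - T * A) - (A * T - T * A) * Λ)
          + ((Λ * T - T * Λ) + (Λ * T - T * Λ)) := by
    intro T
    linear_combination (norm := noncomm_ring) hAΛ2 * T - T * hAΛ2
  have hcommL : ∀ T : Module.End ℝ M,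
      L * (Λ * T - T * Λ) - (Λ * T - T * Λ) * L
        = (Λ * (L * T - T * L) - (L * T - T * L) * Λ) - (A * T - T * A) := by
    intro T
    linear_combination (norm := noncomm_ring) T * hΛL - hΛL * T
  -- [A, X k] = (2k+3) • X k
  have hAX : ∀ k, A * X k - X k * A = (2 * k + 3) • X k := by
    intro k
    induction k with
    | zero =>
      rw [hX0]
      linear_combination (norm := (noncomm_ring; module)) hAΛ2 * δ - δ * hAΛ2 + Λ * hAδ - hAδ * Λ
    | succ k ih =>
      rw [hXs k, hcommA (X k), ih]
      simp only [mul_smul_comm, smul_mul_assoc, ← hX]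
      module
  -- [L, X 0] = 0
  have hLX0 : L * X 0 - X 0 * L = 0 := by
    rw [hX0, hcommL δ, hAδ, hLδ, hδ]
    noncomm_ring
  -- [L, X (k+1)] = -((k+1)(k+3)) • X k
  have hLX : ∀ k, L * X (k + 1) - X (k + 1) * L = -(((k + 1) * (k + 3)) • X k) := by
    intro k
    induction k with
    | zero =>
      rw [hXs 0, hcommL (X 0), hLX0, hAX 0]
      simp only [mul_zero, zero_mul, sub_zero, zero_sub, ← hX]
    | succ k ih =>
      rw [hXs (k + 1), hcommL (X (k + 1)), ih, hAX (k + 1), hXs k]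
      simp only [mul_smul_comm, smul_mul_assoc, mul_neg, neg_mul, smul_neg, ← hX]
      module
  -- ## Step 3: degree bookkeeping with integer indices
  have hDd : ∀ k : ℤ, d * piZ π k = piZ π (k + 1) * (d * piZ π k) := by
    intro k
    rcases lt_or_ge k 0 with hk | hk
    · rw [piZ_neg π hk]; simp
    · obtain ⟨r, rfl⟩ := Int.eq_ofNat_of_zero_le hk
      rw [piZ_natCast, show ((r : ℤ) + 1) = ((r + 1 : ℕ) : ℤ) by push_cast; ring,
        piZ_natCast, ← mul_assoc, ← hddeg]
  have hDΛ : ∀ k : ℤ, Λ * piZ π k = piZ π (k + -2) * (Λ * piZ π k) := by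
    intro k
    rcases lt_or_ge k 0 with hk | hk
    · rw [piZ_neg π hk]; simp
    · obtain ⟨r, rfl⟩ := Int.eq_ofNat_of_zero_le hk
      match r with
      | 0 => rw [piZ_natCast, hΛ0]; simp
      | 1 => rw [piZ_natCast, hΛ1]; simp
      | (s + 2) =>
        rw [piZ_natCast, show ((((s + 2) : ℕ) : ℤ) + -2) = ((s : ℕ) : ℤ) by push_cast; ring,
          piZ_natCast, ← mul_assoc, ← hΛdeg]
  have hDδ : ∀ k : ℤ, δ * piZ π k = piZ π (k + -1) * (δ * piZ π k) := by
    rw [hδ]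
    exact deg_sub π (deg_congr π (by ring) (deg_mul π hDd hDΛ))
      (deg_congr π (by ring) (deg_mul π hDΛ hDd))
  have hDX : ∀ j : ℕ, ∀ k : ℤ, X j * piZ π k
      = piZ π (k + -(2 * (j : ℤ) + 3)) * (X j * piZ π k) := by
    intro j
    induction j with
    | zero =>
      rw [hX0]
      exact deg_sub π (deg_congr π (by ring) (deg_mul π hDΛ hDδ))
        (deg_congr π (by ring) (deg_mul π hDδ hDΛ))
    | succ j ih =>
      rw [hXs j]
      exact deg_sub π (deg_congr π (by push_cast; ring) (deg_mul π hDΛ ih))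
        (deg_congr π (by push_cast; ring) (deg_mul π ih hDΛ))
  -- X n = 0 by degree reasons
  have hXn : X n = 0 := by
    have h1 : X n = X n * 1 := (mul_one _).symm
    rw [h1, ← hsum, Finset.mul_sum]
    refine Finset.sum_eq_zero fun r hr => ?_
    have hr' : (r : ℕ) ≤ 2 * n := by have := Finset.mem_range.mp hr; omega
    have h2 := hDX n (r : ℤ)
    rw [piZ_natCast] at h2
    rw [h2, piZ_neg π (by push_cast; omega)]
    simp
  -- descent: X (n - j) = 0 for all j ≤ n
  have hdesc : ∀ j, j ≤ n → X (n - j) = 0 := by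
    intro j
    induction j with
    | zero => intro _; simpa using hXn
    | succ j ih =>
      intro hj
      have h1 : X (n - j) = 0 := ih (by omega)
      have h2 : n - j = (n - (j + 1)) + 1 := by omega
      have h3 := hLX (n - (j + 1))
      rw [← h2, h1] at h3
      simp only [mul_zero, zero_mul, sub_zero, zero_sub, neg_eq_zero] at h3
      -- h3 : ((n - (j+1) + 1) * (n - (j+1) + 3)) • X (n - (j+1)) = 0
      have h4 : ((n - j) * (n - (j + 1) + 3)) • X (n - (j + 1)) = 0 := neg_eq_zero.mp h3.symm
      have h5 : ((((n - j) * (n - (j + 1) + 3) : ℕ) : ℝ)) • X (n - (j + 1)) = 0 := by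
        rw [Nat.cast_smul_eq_nsmul]
        exact h4
      exact (smul_eq_zero.mp h5).resolve_left
        (by exact_mod_cast Nat.mul_ne_zero (by omega) (by omega))
  have hx : Λ * δ - δ * Λ = 0 := by
    have h := hdesc n le_rfl
    rw [Nat.sub_self, hX0] at h
    exact h
  -- ## Step 4: conclude
  have gA : δ * δ + (d * (Λ * δ) + (Λ * δ) * d) = 0 := by
    nth_rewrite 2 [hδ]
    linear_combination (norm := noncomm_ring) hdδ * Λ + d * hx + hx * d
  have gB : d * (Λ * δ) + (Λ * δ) * d - δ * δ = 0 := by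
    rw [hδ]
    linear_combination (norm := noncomm_ring) Λ * hd2 * Λ - Λ * Λ * hd2
  have h2δ : (2 : ℝ) • (δ * δ) = 0 := by
    rw [two_smul]
    linear_combination (norm := noncomm_ring) gA - gB
  have hδδ : δ * δ = 0 := (smul_eq_zero.mp h2δ).resolve_left (by norm_num)
  exact ⟨hδδ, hdδ⟩
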